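/- If p is a pattern of admissibility degree k (k finite), then there exists a numerical semigroup S that admits every pattern of admissibility degree k+1 but does not admit p. -/

import Mathlib

/-- A numerical semigroup: an additive submonoid of ℕ with finite complement. -/
def IsNumericalSemigroup (S : Set ℕ) : Prop :=
  0 ∈ S ∧ (∀ a ∈ S, ∀ b ∈ S, a + b ∈ S) ∧ Sᶜ.Finite

/-- Evaluation of a pattern (list of coefficients a₁,…,aₙ) at s₁,…,sₙ. -/
def patEval (p : List ℤ) (s : ℕ → ℕ) : ℤ :=
  ∑ i ∈ Finset.range p.length, p.getD i 0 * (s i : ℤ)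

/-- `S` admits the pattern `p`: p(s₁,…,sₙ) ∈ S for all s₁ ≥ ⋯ ≥ sₙ in S. -/
def AdmitsPat (S : Set ℕ) (p : List ℤ) : Prop :=
  ∀ s : ℕ → ℕ, (∀ i, s i ∈ S) → (∀ i j, i ≤ j → s j ≤ s i) →
    ∃ m ∈ S, (m : ℤ) = patEval p s

/-- A pattern is admissible if it is admitted by some numerical semigroup. -/
def Admissible (p : List ℤ) : Prop :=
  ∃ S : Set ℕ, IsNumericalSemigroup S ∧ AdmitsPat S p

/-- The derivative p' of a pattern. -/
def pderiv : List ℤ → List ℤ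
  | [] => []
  | a :: q => if a = 1 then q else (a - 1) :: q

/-- The admissibility degree: least k such that p⁽ᵏ⁾ is not admissible, or ∞. -/
noncomputable def adDeg (p : List ℤ) : ℕ∞ :=
  sInf ((fun m : ℕ => (m : ℕ∞)) '' {m : ℕ | ¬ Admissible (pderiv^[m] p)})

/-- The partial sum bᵢ = a₁ + ⋯ + aᵢ of the coefficients of `p`. -/
def psum (p : List ℤ) (i : ℕ) : ℤ :=
  ∑ j ∈ Finset.range i, p.getD j 0

namespace NSAux

lemma psum_zero (q : List ℤ) : psum q 0 = 0 := by simp [psum]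

lemma psum_succ (q : List ℤ) (i : ℕ) : psum q (i+1) = psum q i + q.getD i 0 :=
  Finset.sum_range_succ _ _

lemma psum_cons (a : ℤ) (t : List ℤ) (i : ℕ) :
    psum (a :: t) (i+1) = a + psum t i := by
  unfold psum
  rw [Finset.sum_range_succ']
  simp [add_comm]

lemma psum_stable (q : List ℤ) (i : ℕ) (h : q.length ≤ i) :
    psum q i = psum q q.length := by
  unfold psum
  refine (Finset.sum_subset (Finset.range_subset_range.2 h) ?_).symm
  intro x hx hnx
  simp only [Finset.mem_range, not_lt] at hnx
  exact List.getD_eq_default _ _ hnx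

lemma getD_ne (q : List ℤ) (hq : ∀ a ∈ q, a ≠ 0) {j : ℕ} (h : j < q.length) :
    q.getD j 0 ≠ 0 := by
  rw [List.getD_eq_getElem _ _ h]
  exact hq _ (List.getElem_mem h)

lemma sum_split (f : ℕ → ℤ) {i n : ℕ} (h : i ≤ n) :
    ∑ l ∈ Finset.range n, f l = ∑ l ∈ Finset.range i, f l + ∑ l ∈ Finset.Ico i n, f l := by
  rw [Finset.range_eq_Ico, ← Finset.sum_Ico_consecutive f (Nat.zero_le i) h,
    ← Finset.range_eq_Ico]

lemma abel1 (q : List ℤ) (s : ℕ → ℕ) (h0 : ∀ i, 0 ≤ psum q i)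
    (hs : ∀ i j, i ≤ j → s j ≤ s i) (M : ℕ) :
    psum q M * (s M : ℤ) ≤ ∑ l ∈ Finset.range M, q.getD l 0 * (s l : ℤ) := by
  induction M with
  | zero => simp [psum_zero]
  | succ M ih =>
      rw [Finset.sum_range_succ]
      have h1 : psum q (M+1) = psum q M + q.getD M 0 := psum_succ q M
      have h2 : (s (M+1) : ℤ) ≤ (s M : ℤ) := by exact_mod_cast hs M (M+1) (by omega)
      nlinarith [h0 (M+1), h0 M, (Nat.cast_nonneg (s M) : (0:ℤ) ≤ s M),
        (Nat.cast_nonneg (s (M+1)) : (0:ℤ) ≤ s (M+1))]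

lemma abel2 (q : List ℤ) (s : ℕ → ℕ) (h0 : ∀ i, 0 ≤ psum q i)
    (hs : ∀ i j, i ≤ j → s j ≤ s i) (M : ℕ) :
    psum q (M+1) * (s M : ℤ) ≤ ∑ l ∈ Finset.range (M+1), q.getD l 0 * (s l : ℤ) := by
  induction M with
  | zero => simp [psum_succ, psum_zero]
  | succ M ih =>
      rw [Finset.sum_range_succ]
      have h1 : psum q (M+2) = psum q (M+1) + q.getD (M+1) 0 := psum_succ q (M+1)
      have h2 : (s (M+1) : ℤ) ≤ (s M : ℤ) := by exact_mod_cast hs M (M+1) (by omega)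
      nlinarith [h0 (M+1), (Nat.cast_nonneg (s (M+1)) : (0:ℤ) ≤ s (M+1))]

lemma adm_to_NN (q : List ℤ) (h : Admissible q) : ∀ i, 0 ≤ psum q i := by
  obtain ⟨S, ⟨h0, hadd, hfin⟩, hadm⟩ := h
  have hM : ∃ M, M ∈ S ∧ 0 < M := by
    have : S.Infinite := by
      have := hfin.infinite_compl
      rwa [compl_compl] at this
    obtain ⟨b, hb, hb0⟩ := this.exists_gt 0
    exact ⟨b, hb, hb0⟩
  obtain ⟨M, hMS, hMpos⟩ := hM
  have key : ∀ i, i ≤ q.length → 0 ≤ psum q i := by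
    intro i hi
    set s : ℕ → ℕ := fun l => if l < i then M else 0 with hs
    have hsS : ∀ l, s l ∈ S := by
      intro l; simp only [hs]; split_ifs <;> assumption
    have hsmono : ∀ a b, a ≤ b → s b ≤ s a := by
      intro a b hab; simp only [hs]; split_ifs <;> omega
    obtain ⟨m, hmS, hmeq⟩ := hadm s hsS hsmono
    have hEval : patEval q s = psum q i * (M : ℤ) := by
      unfold patEval
      rw [sum_split _ hi]
      have h1 : ∑ l ∈ Finset.range i, q.getD l 0 * (s l : ℤ)
          = ∑ l ∈ Finset.range i, q.getD l 0 * (M : ℤ) := by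
        apply Finset.sum_congr rfl
        intro l hl
        simp only [Finset.mem_range] at hl
        simp [hs, hl]
      have h2 : ∑ l ∈ Finset.Ico i q.length, q.getD l 0 * (s l : ℤ) = 0 := by
        apply Finset.sum_eq_zero
        intro l hl
        simp only [Finset.mem_Ico] at hl
        simp [hs, Nat.not_lt.2 hl.1]
      rw [h1, h2, ← Finset.sum_mul, add_zero]
      rfl
    rw [hEval] at hmeq
    by_contra hneg
    push_neg at hneg
    have : (m : ℤ) < 0 := by
      rw [hmeq]
      have : (0:ℤ) < M := by exact_mod_cast hMpos
      exact mul_neg_of_neg_of_pos hneg this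
    omega
  intro i
  rcases le_or_gt i q.length with hle | hlt
  · exact key i hle
  · rw [psum_stable q i hlt.le]
    exact key _ le_rfl

lemma univ_ns : IsNumericalSemigroup Set.univ :=
  ⟨trivial, fun _ _ _ _ => trivial, by simp⟩

lemma NN_to_adm (q : List ℤ) (h : ∀ i, 0 ≤ psum q i) : Admissible q := by
  refine ⟨Set.univ, univ_ns, ?_⟩
  intro s hsS hsmono
  refine ⟨(patEval q s).toNat, trivial, Int.toNat_of_nonneg ?_⟩
  have h1 := abel1 q s h hsmono q.length
  have h2 : 0 ≤ psum q q.length * (s q.length : ℤ) :=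
    mul_nonneg (h _) (Nat.cast_nonneg _)
  unfold patEval
  linarith

lemma pderiv_coeffs {q : List ℤ} (hq : ∀ a ∈ q, a ≠ 0) :
    ∀ a ∈ pderiv q, a ≠ 0 := by
  cases q with
  | nil => simp [pderiv]
  | cons a t =>
      by_cases ha : a = 1
      · simp only [pderiv, ha, if_pos rfl]
        exact fun x hx => hq x (List.mem_cons_of_mem _ hx)
      · simp only [pderiv, if_neg ha]
        intro x hx
        rcases List.mem_cons.1 hx with rfl | hx
        · have ha0 : a ≠ 0 := hq a List.mem_cons_self
          omega
        · exact hq x (List.mem_cons_of_mem _ hx)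

lemma char : ∀ (m : ℕ) (q : List ℤ), (∀ a ∈ q, a ≠ 0) →
    ((∀ i, 0 ≤ psum (pderiv^[m] q) i) ↔
      (∀ i, 1 ≤ i → i ≤ q.length →
        0 ≤ psum q i ∧
        ∀ j, 1 ≤ j → j < i → psum q i ≤ psum q j → (m : ℤ) ≤ psum q i)) := by
  intro m
  induction m with
  | zero =>
    intro q hq
    simp only [Function.iterate_zero, id_eq, Nat.cast_zero]
    constructor
    · intro h i _ _
      exact ⟨h i, fun j _ _ _ => h i⟩
    · intro h i
      rcases Nat.eq_zero_or_pos i with rfl | hi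
      · simp [psum_zero]
      rcases le_or_gt i q.length with hle | hlt
      · exact (h i hi hle).1
      · rw [psum_stable q i hlt.le]
        rcases Nat.eq_zero_or_pos q.length with hlen | hlen
        · rw [hlen]; simp [psum_zero]
        · exact (h q.length hlen le_rfl).1
  | succ m ih =>
    intro q hq
    rw [Function.iterate_succ_apply]
    rw [ih (pderiv q) (pderiv_coeffs hq)]
    cases q with
    | nil =>
      constructor <;> intro h i h1 h2
      · exact absurd h2 (by simp; omega)
      · exact absurd h2 (by simp [pderiv] at h2 ⊢; omega)
    | cons a t =>
      by_cases ha : a = 1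
      · subst ha
        rw [show pderiv (1 :: t) = t from by simp [pderiv]]
        constructor
        · intro A i hi1 hile
          simp only [List.length_cons] at hile
          obtain ⟨i', rfl⟩ : ∃ i', i = i' + 1 := ⟨i - 1, by omega⟩
          rw [psum_cons]
          rcases Nat.eq_zero_or_pos i' with rfl | hi'
          · refine ⟨by simp [psum_zero], fun j hj1 hj2 _ => absurd hj2 (by omega)⟩
          have hi't : i' ≤ t.length := by omega
          obtain ⟨hA1, hA2⟩ := A i' hi' hi't
          refine ⟨by linarith, ?_⟩
          intro j hj1 hji hcmp
          push_cast
          rcases Nat.lt_or_ge j 2 with hj2 | hj2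
          · -- j = 1
            have hj : j = 1 := by omega
            subst hj
            rw [show (1:ℕ) = 0 + 1 from rfl, psum_cons, psum_zero] at hcmp
            have hPt0 : psum t i' = 0 := by linarith
            rcases Nat.lt_or_ge i' 2 with hi2 | hi2
            · -- i' = 1 : contradiction with nonzero coeff
              have : i' = 1 := by omega
              subst this
              have : psum t 1 = t.getD 0 0 := by
                rw [show (1:ℕ) = 0 + 1 from rfl, psum_succ, psum_zero, zero_add]
              have hne := getD_ne t (fun x hx => hq x (List.mem_cons_of_mem _ hx))
                (show 0 < t.length by omega)
              rw [this] at hPt0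
              exact absurd hPt0 hne
            · have h1len : 1 ≤ t.length := by omega
              have hPt1 := (A 1 le_rfl h1len).1
              have := hA2 1 le_rfl (by omega) (by linarith)
              linarith
          · obtain ⟨j', rfl⟩ : ∃ j', j = j' + 1 := ⟨j - 1, by omega⟩
            simp only [psum_cons] at hcmp
            have := hA2 j' (by omega) (by omega) (by linarith)
            linarith
        · intro B i hi1 hile
          have hlen : i + 1 ≤ (1 :: t).length := by simp; omega
          obtain ⟨hB1, hB2⟩ := B (i+1) (by omega) hlen
          rw [psum_cons] at hB1
          have hnn : 0 ≤ psum t i := by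
            by_contra hneg
            push_neg at hneg
            have hc : psum (1 :: t) (i+1) ≤ psum (1 :: t) 1 := by
              rw [psum_cons, show (1:ℕ) = 0 + 1 from rfl, psum_cons, psum_zero]
              linarith
            have := hB2 1 le_rfl (by omega) hc
            rw [psum_cons] at this
            push_cast at this
            linarith
          refine ⟨hnn, ?_⟩
          intro j hj1 hji hcmp
          have hc : psum (1 :: t) (i+1) ≤ psum (1 :: t) (j+1) := by
            rw [psum_cons, psum_cons]; linarith
          have := hB2 (j+1) (by omega) (by omega) hc
          rw [psum_cons] at this
          push_cast at this
          linarith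
      · rw [show pderiv (a :: t) = (a - 1) :: t from by simp [pderiv, ha]]
        have hP : ∀ i, 1 ≤ i → psum ((a-1) :: t) i = psum (a :: t) i - 1 := by
          intro i hi
          obtain ⟨i', rfl⟩ : ∃ i', i = i' + 1 := ⟨i - 1, by omega⟩
          rw [psum_cons, psum_cons]; ring
        have hlen : ((a-1) :: t).length = (a :: t).length := by simp
        constructor
        · intro A i hi1 hile
          obtain ⟨hA1, hA2⟩ := A i hi1 (by omega)
          rw [hP i hi1] at hA1
          refine ⟨by linarith, ?_⟩
          intro j hj1 hji hcmp
          have := hA2 j hj1 hji (by rw [hP i hi1, hP j hj1]; linarith)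
          rw [hP i hi1] at this
          push_cast
          linarith
        · intro B i hi1 hile
          rw [hlen] at hile
          obtain ⟨hB1, hB2⟩ := B i hi1 hile
          have hnn : 1 ≤ psum (a :: t) i := by
            rcases lt_or_ge 0 (psum (a :: t) i) with h | h
            · omega
            have heq : psum (a :: t) i = 0 := le_antisymm h hB1
            exfalso
            rcases Nat.lt_or_ge i 2 with hi2 | hi2
            · have : i = 1 := by omega
              subst this
              rw [show (1:ℕ) = 0 + 1 from rfl, psum_cons, psum_zero] at heq
              have ha0 : a ≠ 0 := hq a List.mem_cons_self
              omega
            · have hprev := (B (i-1) (by omega) (by omega)).1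
              have := hB2 (i-1) (by omega) (by omega) (by omega)
              push_cast at this
              omega
          refine ⟨by rw [hP i hi1]; linarith, ?_⟩
          intro j hj1 hji hcmp
          rw [hP i hi1, hP j hj1] at hcmp
          have := hB2 j hj1 hji (by linarith)
          rw [hP i hi1]
          push_cast at this ⊢
          linarith

lemma not_adm_of_dom (q : List ℤ) (hq : ∀ a ∈ q, a ≠ 0) {i j : ℕ}
    (h1j : 1 ≤ j) (hji : j < i) (hi : i ≤ q.length)
    (hdom : psum q i ≤ psum q j) (hnn : 0 ≤ psum q i) :
    ¬ Admissible (pderiv^[(psum q i).toNat + 1] q) := by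
  intro had
  have hNN := adm_to_NN _ had
  have hR := (char ((psum q i).toNat + 1) q hq).1 hNN
  obtain ⟨-, h2⟩ := hR i (by omega) hi
  have := h2 j h1j hji hdom
  have hcast : ((psum q i).toNat : ℤ) = psum q i := Int.toNat_of_nonneg hnn
  push_cast at this
  omega

lemma adDeg_spec (q : List ℤ) (k : ℕ) (h : adDeg q = (k : ℕ∞)) :
    ¬ Admissible (pderiv^[k] q) ∧ ∀ m, m < k → Admissible (pderiv^[m] q) := by
  have h2 : ∀ m, m < k → Admissible (pderiv^[m] q) := by
    intro m hm
    by_contra hc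
    have hle : adDeg q ≤ (m : ℕ∞) := sInf_le ⟨m, hc, rfl⟩
    rw [h] at hle
    have : k ≤ m := by exact_mod_cast hle
    omega
  refine ⟨?_, h2⟩
  by_contra hc
  have hge : ((k+1 : ℕ) : ℕ∞) ≤ adDeg q := by
    apply le_sInf
    rintro x ⟨m, hm, rfl⟩
    have hm1 : ¬ m < k := fun hlt => hm (h2 m hlt)
    have hm2 : m ≠ k := fun he => hm (he ▸ hc)
    show ((k+1:ℕ) : ℕ∞) ≤ ((m : ℕ) : ℕ∞)
    exact_mod_cast (by omega : k + 1 ≤ m)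
  rw [h] at hge
  have : k + 1 ≤ k := by exact_mod_cast hge
  omega

lemma admits_of (S : Set ℕ) (hS : IsNumericalSemigroup S) (N k : ℕ)
    (hk : 1 ≤ k)
    (hmin : ∀ x ∈ S, x ≠ 0 → N ≤ x) (hup : ∀ x : ℕ, k * N ≤ x → x ∈ S)
    (q : List ℤ) (hq : ∀ a ∈ q, a ≠ 0) (h0 : ∀ i, 0 ≤ psum q i)
    (hdom : ∀ i, 1 ≤ i → i ≤ q.length → ∀ j, 1 ≤ j → j < i →
      psum q i ≤ psum q j → (k : ℤ) ≤ psum q i) :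
    AdmitsPat S q := by
  obtain ⟨hzero, hadd, hfin⟩ := hS
  intro s hsS hsmono
  classical
  set n := q.length with hn
  have hPex : ∃ l, n ≤ l ∨ s l = 0 := ⟨n, Or.inl le_rfl⟩
  obtain ⟨M, hMspec, hMmin⟩ : ∃ M, (n ≤ M ∨ s M = 0) ∧ ∀ l, l < M → ¬(n ≤ l ∨ s l = 0) :=
    ⟨Nat.find hPex, Nat.find_spec hPex, fun l hl => Nat.find_min hPex hl⟩
  have hMlt : ∀ l, l < M → l < n ∧ s l ≠ 0 := by
    intro l hl
    have := hMmin l hl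
    push_neg at this
    exact ⟨by omega, this.2⟩
  have hMn : M ≤ n := by
    by_contra h
    exact absurd (hMlt n (by omega)).1 (lt_irrefl n)
  have hzafter : ∀ l, M ≤ l → l < n → s l = 0 := by
    intro l h1 h2
    rcases hMspec with h | h
    · omega
    · have := hsmono M l h1
      omega
  have hEval : patEval q s = ∑ l ∈ Finset.range M, q.getD l 0 * (s l : ℤ) := by
    unfold patEval
    rw [← hn, sum_split _ hMn]
    have hz : ∑ l ∈ Finset.Ico M n, q.getD l 0 * (s l : ℤ) = 0 := by
      apply Finset.sum_eq_zero
      intro l hl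
      simp only [Finset.mem_Ico] at hl
      rw [hzafter l hl.1 hl.2]
      simp
    rw [hz, add_zero]
  by_cases hcase : (k : ℤ) ≤ psum q M
  · have hM1 : 1 ≤ M := by
      by_contra h
      have hM0 : M = 0 := by omega
      rw [hM0, psum_zero] at hcase
      have : (0:ℤ) < k := by exact_mod_cast hk
      linarith
    obtain ⟨M', rfl⟩ : ∃ M', M = M' + 1 := ⟨M - 1, by omega⟩
    have hsM' : N ≤ s M' := hmin _ (hsS M') (hMlt M' (by omega)).2
    have habel := abel2 q s h0 hsmono M'
    have hge : ((k * N : ℕ) : ℤ) ≤ patEval q s := by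
      rw [hEval]
      have h1 : ((k * N : ℕ) : ℤ) ≤ psum q (M' + 1) * (s M' : ℤ) := by
        push_cast
        have hNle : (N : ℤ) ≤ (s M' : ℤ) := by exact_mod_cast hsM'
        have hkpos : (0:ℤ) ≤ (k:ℤ) := by positivity
        have hNpos : (0:ℤ) ≤ (N:ℤ) := by positivity
        exact mul_le_mul hcase hNle hNpos (le_trans hkpos hcase)
      linarith
    have hnn : 0 ≤ patEval q s := le_trans (by positivity) hge
    refine ⟨(patEval q s).toNat, hup _ ?_, (Int.toNat_of_nonneg hnn)⟩
    have : ((k * N : ℕ) : ℤ) ≤ ((patEval q s).toNat : ℤ) := by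
      rw [Int.toNat_of_nonneg hnn]; exact hge
    exact_mod_cast this
  · push_neg at hcase
    have hpos : ∀ l, l < M → 1 ≤ q.getD l 0 := by
      intro l hl
      by_contra hneg
      push_neg at hneg
      have hln : l < n := (hMlt l hl).1
      have hne := getD_ne q hq hln
      have hneg1 : q.getD l 0 ≤ -1 := by omega
      have hl1 : 1 ≤ l := by
        by_contra h
        have hl0 : l = 0 := by omega
        have := h0 1
        rw [show (1:ℕ) = 0 + 1 from rfl, psum_succ, psum_zero, zero_add] at this
        rw [hl0] at hneg1
        linarith
      have hstep : psum q (l+1) ≤ psum q l - 1 := by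
        rw [psum_succ]; linarith
      have hkl : (k:ℤ) ≤ psum q (l+1) :=
        hdom (l+1) (by omega) (by omega) l hl1 (by omega) (by linarith [h0 l])
      have hprop : (k:ℤ) ≤ psum q M := by
        by_cases hEM : l + 1 = M
        · rw [← hEM]; exact hkl
        · have hlM : l + 1 < M := by omega
          by_cases hdomM : ∃ j, 1 ≤ j ∧ j < M ∧ psum q M ≤ psum q j
          · obtain ⟨j, hj1, hj2, hj3⟩ := hdomM
            exact hdom M (by omega) hMn j hj1 hj2 hj3
          · push_neg at hdomM
            have := hdomM (l+1) (by omega) hlM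
            linarith
      linarith
    set W : ℕ := ∑ l ∈ Finset.range M, (q.getD l 0).toNat * s l with hW
    have hmul : ∀ (t x : ℕ), x ∈ S → t * x ∈ S := by
      intro t
      induction t with
      | zero => intro x _; simpa using hzero
      | succ t iht =>
          intro x hx
          have := hadd _ (iht x hx) x hx
          rwa [Nat.succ_mul]
    have hWS : W ∈ S := by
      rw [hW]
      apply Finset.sum_induction _ (· ∈ S) (fun a b ha hb => hadd a ha b hb) hzero
      intro l _
      exact hmul _ _ (hsS l)
    refine ⟨W, hWS, ?_⟩
    rw [hEval, hW]
    push_cast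
    apply Finset.sum_congr rfl
    intro l hl
    simp only [Finset.mem_range] at hl
    rw [Int.toNat_of_nonneg (by linarith [hpos l hl])]

end NSAux

open NSAux

/-- If p has (finite) admissibility degree k, then some numerical semigroup S
admits every pattern of admissibility degree k+1 but does not admit p. -/
theorem stmt_9 (p : List ℤ) (hp : ∀ a ∈ p, a ≠ 0) (k : ℕ)
    (hdeg : adDeg p = (k : ℕ∞)) :
    ∃ S : Set ℕ, IsNumericalSemigroup S ∧
      (∀ q : List ℤ, (∀ a ∈ q, a ≠ 0) → adDeg q = ((k + 1 : ℕ) : ℕ∞) →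
        AdmitsPat S q) ∧
      ¬ AdmitsPat S p := by
  rcases Nat.eq_zero_or_pos k with rfl | hk
  · -- k = 0 : p is not admissible, ℕ works
    obtain ⟨hnotadm, -⟩ := adDeg_spec p 0 hdeg
    simp only [Function.iterate_zero, id_eq] at hnotadm
    refine ⟨Set.univ, univ_ns, ?_, ?_⟩
    · intro q hq hdq
      obtain ⟨-, hbelow⟩ := adDeg_spec q 1 hdq
      have hadm : Admissible q := by
        have := hbelow 0 (by omega)
        simpa using this
      have hNN := adm_to_NN q hadm
      intro s hsS hsmono
      refine ⟨(patEval q s).toNat, trivial, Int.toNat_of_nonneg ?_⟩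
      have h1 := abel1 q s hNN hsmono q.length
      have h2 : 0 ≤ psum q q.length * ((s q.length : ℕ) : ℤ) :=
        mul_nonneg (hNN _) (Nat.cast_nonneg _)
      unfold patEval
      linarith
    · intro hadm
      exact hnotadm ⟨Set.univ, univ_ns, hadm⟩
  · -- k ≥ 1
    obtain ⟨hnotadm, hbelow⟩ := adDeg_spec p k hdeg
    have hadmp : Admissible p := by
      have := hbelow 0 hk; simpa using this
    have hb0 : ∀ i, 0 ≤ psum p i := adm_to_NN p hadmp
    have hadmk1 : Admissible (pderiv^[k-1] p) := hbelow (k-1) (by omega)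
    have hdomp : ∀ i, 1 ≤ i → i ≤ p.length → ∀ j, 1 ≤ j → j < i →
        psum p i ≤ psum p j → (k:ℤ) - 1 ≤ psum p i := by
      intro i hi1 hin j hj1 hji hcmp
      have hR := ((char (k-1) p hp).1 (adm_to_NN _ hadmk1)) i hi1 hin
      have h2 := hR.2 j hj1 hji hcmp
      rw [Nat.cast_sub hk] at h2
      push_cast at h2
      linarith
    have hNNk : ¬ (∀ i, 0 ≤ psum (pderiv^[k] p) i) :=
      fun h => hnotadm (NN_to_adm _ h)
    rw [char k p hp] at hNNk
    push_neg at hNNk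
    obtain ⟨i, hi1, hin, hbad⟩ := hNNk
    obtain ⟨j, hj1, hji, hcmp, hilt⟩ := hbad (hb0 i)
    have hieq : psum p i = (k:ℤ) - 1 :=
      le_antisymm (by omega) (hdomp i hi1 hin j hj1 hji hcmp)
    -- find j0 with psum p j0 ≥ k
    have hjex : ∃ j0, 1 ≤ j0 ∧ j0 < i ∧ (k:ℤ) ≤ psum p j0 := by
      by_contra hcon
      push_neg at hcon
      have hjeq : psum p j = (k:ℤ) - 1 := by
        have := hcon j hj1 hji
        omega
      have hne : psum p (j+1) ≠ psum p j := by
        rw [psum_succ]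
        have := getD_ne p hp (show j < p.length by omega)
        intro h
        have : p.getD j 0 = 0 := by linarith
        exact (getD_ne p hp (show j < p.length by omega)) this
      by_cases hcase2 : j + 1 = i
      · rw [hcase2] at hne
        rw [hieq, hjeq] at hne
        exact hne rfl
      · have hj2i : j + 1 < i := by omega
        have hle2 : psum p (j+1) < (k:ℤ) := hcon (j+1) (by omega) hj2i
        have hdom2 : (k:ℤ) - 1 ≤ psum p (j+1) :=
          hdomp (j+1) (by omega) (by omega) j hj1 (by omega) (by rw [hjeq]; omega)
        have : psum p (j+1) = (k:ℤ) - 1 := by omega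
        rw [this, hjeq] at hne
        exact hne rfl
    obtain ⟨j0, hj01, hj0i, hdge⟩ := hjex
    set d : ℕ := (psum p j0).toNat with hd
    have hdcast : (d:ℤ) = psum p j0 := Int.toNat_of_nonneg (hb0 j0)
    have hdk : k ≤ d := by
      have : (k:ℤ) ≤ (d:ℤ) := by rw [hdcast]; exact hdge
      exact_mod_cast this
    set N : ℕ := d + 1 with hN
    set c : ℕ := k - 1 with hc
    have hkc : k = c + 1 := by omega
    set S : Set ℕ :=
      {x | x = 0 ∨ (∃ t, 1 ≤ t ∧ t ≤ c ∧ t * N ≤ x ∧ x ≤ t * N + t) ∨ k * N ≤ x}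
      with hSdef
    have hupS : ∀ x : ℕ, k * N ≤ x → x ∈ S := fun x hx => Or.inr (Or.inr hx)
    have hSzero : (0:ℕ) ∈ S := Or.inl rfl
    have hSadd : ∀ a ∈ S, ∀ b ∈ S, a + b ∈ S := by
      rintro x hx y hy
      rcases hx with rfl | ⟨t, ht1, htc, htl, htr⟩ | hx
      · simpa using hy
      · rcases hy with rfl | ⟨u, hu1, huc, hul, hur⟩ | hy
        · exact Or.inr (Or.inl ⟨t, ht1, htc, by omega, by omega⟩)
        · by_cases htu : t + u ≤ c
          · refine Or.inr (Or.inl ⟨t + u, by omega, htu, ?_, ?_⟩)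
            · have e : (t + u) * N = t * N + u * N := add_mul t u N
              omega
            · have e : (t + u) * N = t * N + u * N := add_mul t u N
              omega
          · refine Or.inr (Or.inr ?_)
            have h1 : k ≤ t + u := by omega
            have h2 : k * N ≤ (t + u) * N := Nat.mul_le_mul_right N h1
            have e : (t + u) * N = t * N + u * N := add_mul t u N
            omega
        · exact Or.inr (Or.inr (by omega))
      · exact Or.inr (Or.inr (by omega))
    have hSfin : Sᶜ.Finite := by
      apply Set.Finite.subset (Set.finite_Iio (k * N))
      intro x hx
      simp only [Set.mem_compl_iff] at hx
      by_contra h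
      simp only [Set.mem_Iio, not_lt] at h
      exact hx (hupS x h)
    have hSns : IsNumericalSemigroup S := ⟨hSzero, hSadd, hSfin⟩
    have hminS : ∀ x ∈ S, x ≠ 0 → N ≤ x := by
      rintro x (rfl | ⟨t, ht1, htc, htl, htr⟩ | hx) hne
      · omega
      · have : 1 * N ≤ t * N := Nat.mul_le_mul_right N ht1
        omega
      · have : 1 * N ≤ k * N := Nat.mul_le_mul_right N hk
        omega
    refine ⟨S, hSns, ?_, ?_⟩
    · -- admits every pattern of degree k+1
      intro q hqne hqdeg
      obtain ⟨-, hqbelow⟩ := adDeg_spec q (k+1) hqdeg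
      have hq0 : ∀ i, 0 ≤ psum q i := by
        apply adm_to_NN
        have := hqbelow 0 (by omega)
        simpa using this
      have hqdom : ∀ i, 1 ≤ i → i ≤ q.length → ∀ j, 1 ≤ j → j < i →
          psum q i ≤ psum q j → (k:ℤ) ≤ psum q i := by
        intro i2 hi21 hi2n j2 hj21 hj2i hcmp2
        by_contra hlt
        push_neg at hlt
        have hnn := hq0 i2
        have htn : ((psum q i2).toNat : ℤ) = psum q i2 := Int.toNat_of_nonneg hnn
        have hm0 : (psum q i2).toNat + 1 ≤ k := by omega
        exact (not_adm_of_dom q hqne hj21 hj2i hi2n hcmp2 hnn)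
          (hqbelow _ (by omega))
      exact admits_of S hSns N k hk hminS hupS q hqne hq0 hqdom
    · -- does not admit p
      intro hadm
      set s : ℕ → ℕ := fun l => if l < j0 then N + 1 else if l < i then N else 0
        with hs
      have hmemN : N ∈ S := by
        rcases Nat.eq_zero_or_pos c with hc0 | hc1
        · refine Or.inr (Or.inr ?_)
          have : k = 1 := by omega
          rw [this, one_mul]
        · exact Or.inr (Or.inl ⟨1, le_rfl, hc1, by omega, by omega⟩)
      have hmemN1 : N + 1 ∈ S := by
        rcases Nat.eq_zero_or_pos c with hc0 | hc1
        · refine Or.inr (Or.inr ?_)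
          have : k = 1 := by omega
          rw [this, one_mul]
          omega
        · exact Or.inr (Or.inl ⟨1, le_rfl, hc1, by omega, by omega⟩)
      have hsS : ∀ l, s l ∈ S := by
        intro l
        simp only [hs]
        split_ifs
        · exact hmemN1
        · exact hmemN
        · exact hSzero
      have hsmono : ∀ a b, a ≤ b → s b ≤ s a := by
        intro a b hab
        simp only [hs]
        split_ifs <;> omega
      obtain ⟨m, hmS, hmeq⟩ := hadm s hsS hsmono
      have hj0n : j0 ≤ p.length := by omega
      have hval : patEval p s = ((d + c * N : ℕ) : ℤ) := by
        unfold patEval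
        rw [sum_split _ hj0n,
          ← Finset.sum_Ico_consecutive _ (show j0 ≤ i by omega) hin]
        have h1 : ∑ l ∈ Finset.range j0, p.getD l 0 * (s l : ℤ)
            = psum p j0 * ((N:ℤ) + 1) := by
          rw [show psum p j0 = ∑ l ∈ Finset.range j0, p.getD l 0 from rfl,
            Finset.sum_mul]
          apply Finset.sum_congr rfl
          intro l hl
          simp only [Finset.mem_range] at hl
          simp only [hs, if_pos hl]
          push_cast
          ring
        have h2 : ∑ l ∈ Finset.Ico j0 i, p.getD l 0 * (s l : ℤ)
            = (psum p i - psum p j0) * (N:ℤ) := by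
          have hsplit := sum_split (fun l => p.getD l 0) (show j0 ≤ i by omega)
          have hIco : ∑ l ∈ Finset.Ico j0 i, p.getD l 0
              = psum p i - psum p j0 := by
            have : psum p i = psum p j0 + ∑ l ∈ Finset.Ico j0 i, p.getD l 0 := hsplit
            linarith
          rw [← hIco, Finset.sum_mul]
          apply Finset.sum_congr rfl
          intro l hl
          simp only [Finset.mem_Ico] at hl
          simp only [hs, if_neg (by omega : ¬ l < j0), if_pos hl.2]
        have h3 : ∑ l ∈ Finset.Ico i p.length, p.getD l 0 * (s l : ℤ) = 0 := by
          apply Finset.sum_eq_zero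
          intro l hl
          simp only [Finset.mem_Ico] at hl
          simp only [hs, if_neg (by omega : ¬ l < j0), if_neg (by omega : ¬ l < i)]
          simp
        rw [h1, h2, h3, add_zero, hieq, ← hdcast]
        have hcc : (c:ℤ) = (k:ℤ) - 1 := by
          rw [hc, Nat.cast_sub hk]
          push_cast
          ring
        push_cast
        rw [← hcc]
        ring
      have hmval : m = d + c * N := by
        have : (m:ℤ) = ((d + c * N : ℕ) : ℤ) := by rw [hmeq, hval]
        exact_mod_cast this
      rw [hmval] at hmS
      -- show d + c*N ∉ S
      rcases hmS with h0 | ⟨t, ht1, htc, htl, htr⟩ | hup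
      · omega
      · by_cases htec : t = c
        · subst htec
          omega
        · have htlt : t < c := by omega
          have h1 : t * N + N ≤ c * N := by
            have : (t + 1) * N ≤ c * N := Nat.mul_le_mul_right N (by omega)
            have e : (t + 1) * N = t * N + 1 * N := add_mul t 1 N
            omega
          omega
      · have e : (c + 1) * N = c * N + N := by ring
        rw [hkc] at hup
        omega
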